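/- Let β > 0, T > 0, ε > 0, and let X = (X_n)_{n≥1} be a weak solution of the inviscid dyadic model on [0,T] with X_n(t) ≥ 0 for all n and t, such that sup_{t∈[0,T]} sup_{n≥1} (λ_n^{(β-1)/3 + ε} X_n(t)) < ∞. Then X is the unique solution with initial condition (X_n(0))_{n≥1} in the class of solutions satisfying the same bound: any weak solution Y on [0,T] with the same initial condition and with sup_{t∈[0,T]} sup_{n≥1} (λ_n^{(β-1)/3 + ε} |Y_n(t)|) < ∞ coincides with X. -/

import Mathlib

open Set Filter

/-- The dyadic frequencies: `λ_0 = 0`, `λ_n = 2^n` for `n ≥ 1`. -/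
noncomputable def lam (n : ℕ) : ℝ := if n = 0 then 0 else 2 ^ n

/-- `X` is a weak solution of the inviscid dyadic model with parameter `β` on `I`. -/
def IsInviscidSolution (β : ℝ) (I : Set ℝ) (X : ℕ → ℝ → ℝ) : Prop :=
  ∀ n, 1 ≤ n → ∀ t ∈ I, HasDerivWithinAt (X n)
    (lam (n - 1) ^ β * (X (n - 1) t) ^ 2 - lam n ^ β * X n t * X (n + 1) t) I t

lemma lam_nonneg (n : ℕ) : 0 ≤ lam n := by
  unfold lam; split <;> positivity

lemma lam_rpow {n : ℕ} (hn : 1 ≤ n) (s : ℝ) : lam n ^ s = (2:ℝ) ^ ((n:ℝ) * s) := by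
  unfold lam
  rw [if_neg (by omega), ← Real.rpow_natCast 2 n, ← Real.rpow_mul (by norm_num)]

lemma lam_zero_rpow {β : ℝ} (hβ : β ≠ 0) : lam 0 ^ β = 0 := by
  simp [lam, Real.zero_rpow hβ]

lemma mono_aux {a b : ℝ} {f f' : ℝ → ℝ}
    (h : ∀ t ∈ Set.Icc a b, HasDerivWithinAt f (f' t) (Set.Icc a b) t)
    (h0 : ∀ t ∈ Set.Icc a b, 0 ≤ f' t) : MonotoneOn f (Set.Icc a b) :=
  monotoneOn_of_hasDerivWithinAt_nonneg (convex_Icc a b)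
    (fun t ht => (h t ht).continuousWithinAt)
    (fun x hx => ((h x (interior_subset hx)).mono interior_subset))
    (fun x hx => h0 x (interior_subset hx))

lemma pow2_mul_le {x A c : ℝ} (h : (2:ℝ) ^ x * A ≤ c) : A ≤ c * (2:ℝ) ^ (-x) := by
  have h2' : (0:ℝ) < (2:ℝ) ^ (-x) := Real.rpow_pos_of_pos two_pos (-x)
  have e : (2:ℝ) ^ (-x) * (2:ℝ) ^ x = 1 := by
    rw [← Real.rpow_add two_pos]; simp
  calc A = (2:ℝ) ^ (-x) * ((2:ℝ) ^ x * A) := by rw [← mul_assoc, e, one_mul]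
    _ ≤ (2:ℝ) ^ (-x) * c := mul_le_mul_of_nonneg_left h h2'.le
    _ = c * (2:ℝ) ^ (-x) := mul_comm _ _

lemma Y_nonneg {β T : ℝ} (hT : 0 < T) {Y : ℕ → ℝ → ℝ}
    (hYsol : IsInviscidSolution β (Set.Icc 0 T) Y)
    (hY0 : ∀ n, 1 ≤ n → 0 ≤ Y n 0) :
    ∀ n, 1 ≤ n → ∀ t ∈ Set.Icc (0:ℝ) T, 0 ≤ Y n t := by
  intro n hn t ht
  set clamp : ℝ → ℝ := fun s => max 0 (min s T) with hclampdef
  have hclampcont : Continuous clamp := continuous_const.max (continuous_id.min continuous_const)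
  have hclampmem : ∀ s, clamp s ∈ Set.Icc (0:ℝ) T :=
    fun s => ⟨le_max_left _ _, max_le hT.le (min_le_right _ _)⟩
  have hclampeq : ∀ s ∈ Set.Icc (0:ℝ) T, clamp s = s := by
    intro s hs
    simp only [hclampdef]
    rw [min_eq_left hs.2, max_eq_right hs.1]
  have hYcont : ContinuousOn (Y (n+1)) (Set.Icc 0 T) :=
    fun s hs => (hYsol (n+1) (by omega) s hs).continuousWithinAt
  set c : ℝ → ℝ := fun s => lam n ^ β * Y (n+1) (clamp s) with hcdef
  have hccont : Continuous c :=
    continuous_const.mul (hYcont.comp_continuous hclampcont hclampmem)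
  set F : ℝ → ℝ := fun u => ∫ x in (0:ℝ)..u, c x with hFdef
  have hF : ∀ u, HasDerivAt F (c u) u := fun u =>
    (hccont.integral_hasStrictDerivAt 0 u).hasDerivAt
  set g : ℝ → ℝ := fun s => Y n s * Real.exp (F s) with hgdef
  set g' : ℝ → ℝ := fun s => Real.exp (F s) * (lam (n-1) ^ β * (Y (n-1) s) ^ 2) with hg'def
  have hg : ∀ s ∈ Set.Icc (0:ℝ) T, HasDerivWithinAt g (g' s) (Set.Icc 0 T) s := by
    intro s hs
    have hexp : HasDerivAt (fun u => Real.exp (F u)) (Real.exp (F s) * c s) s := (hF s).exp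
    have h1 := (hYsol n hn s hs).mul hexp.hasDerivWithinAt
    have heq : (lam (n - 1) ^ β * (Y (n - 1) s) ^ 2 - lam n ^ β * Y n s * Y (n + 1) s) *
        Real.exp (F s) + Y n s * (Real.exp (F s) * c s) = g' s := by
      simp only [hg'def, hcdef, hclampeq s hs]
      ring
    rw [heq] at h1
    exact h1
  have hg0 : ∀ s ∈ Set.Icc (0:ℝ) T, 0 ≤ g' s := by
    intro s hs
    simp only [hg'def]
    have := lam_nonneg (n-1)
    positivity
  have hmono := mono_aux hg hg0
  have h0mem : (0:ℝ) ∈ Set.Icc (0:ℝ) T := ⟨le_refl _, hT.le⟩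
  have hle := hmono h0mem ht ht.1
  have hg0val : 0 ≤ g 0 := by
    simp only [hgdef]
    exact mul_nonneg (hY0 n hn) (Real.exp_nonneg _)
  have hgt : 0 ≤ Y n t * Real.exp (F t) := le_trans hg0val hle
  nlinarith [Real.exp_pos (F t)]

noncomputable def ww (k : ℕ) : ℝ := ((2:ℝ) ^ k)⁻¹

lemma ww_pos (k : ℕ) : 0 < ww k := by unfold ww; positivity

lemma ww_eq_rpow (k : ℕ) : ww k = (2:ℝ) ^ (-(k:ℝ)) := by
  rw [Real.rpow_neg (by norm_num), Real.rpow_natCast]; rfl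

def dd (X Y : ℕ → ℝ → ℝ) (k : ℕ) (t : ℝ) : ℝ := Y k t - X k t

noncomputable def AA (β : ℝ) (X Y : ℕ → ℝ → ℝ) (n : ℕ) (t : ℝ) : ℝ :=
  2 * ww n * lam (n-1) ^ β * dd X Y (n-1) t * dd X Y n t * (X (n-1) t + Y (n-1) t)

noncomputable def BB (β : ℝ) (X Y : ℕ → ℝ → ℝ) (n : ℕ) (t : ℝ) : ℝ :=
  2 * ww n * lam n ^ β * X n t * dd X Y n t * dd X Y (n+1) t

noncomputable def GG (β : ℝ) (X Y : ℕ → ℝ → ℝ) (n : ℕ) (t : ℝ) : ℝ :=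
  2 * ww n * lam n ^ β * (dd X Y n t)^2 * Y (n+1) t

lemma term_eq (β : ℝ) (X Y : ℕ → ℝ → ℝ) (i : ℕ) (t : ℝ) :
    ww (i+1) * (2 * dd X Y (i+1) t *
      ((lam i ^ β * (Y i t)^2 - lam (i+1) ^ β * Y (i+1) t * Y (i+2) t)
        - (lam i ^ β * (X i t)^2 - lam (i+1) ^ β * X (i+1) t * X (i+2) t)))
    = AA β X Y (i+1) t - BB β X Y (i+1) t - GG β X Y (i+1) t := by
  simp only [AA, BB, GG, dd, Nat.add_sub_cancel]
  ring

lemma step_eq (β : ℝ) (X Y : ℕ → ℝ → ℝ) (i : ℕ) (t : ℝ) :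
    AA β X Y (i+2) t - BB β X Y (i+1) t - GG β X Y (i+1) t
    = -(ww (i+1) * lam (i+1) ^ β * (dd X Y (i+1) t)^2 * (X (i+2) t + Y (i+2) t)) := by
  simp only [AA, BB, GG, dd, ww, Nat.add_sub_cancel, pow_succ, (by omega : i + 2 - 1 = i + 1)]
  field_simp
  ring

/-- a positive weak solution of the inviscid dyadic model with
`sup_{t,n} λ_n^{(β-1)/3+ε} X_n(t) < ∞` is unique in the class of solutions
satisfying the same bound. -/
theorem inviscid_uniqueness_in_class
    (β T ε : ℝ) (hβ : 0 < β) (hT : 0 < T) (hε : 0 < ε)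
    (X : ℕ → ℝ → ℝ) (hX : IsInviscidSolution β (Set.Icc 0 T) X)
    (hpos : ∀ n, 1 ≤ n → ∀ t ∈ Set.Icc (0 : ℝ) T, 0 ≤ X n t)
    (hbd : ∃ C : ℝ, ∀ t ∈ Set.Icc (0 : ℝ) T, ∀ n, 1 ≤ n →
      lam n ^ ((β - 1) / 3 + ε) * X n t ≤ C) :
    ∀ Y : ℕ → ℝ → ℝ, IsInviscidSolution β (Set.Icc 0 T) Y →
      (∃ C : ℝ, ∀ t ∈ Set.Icc (0 : ℝ) T, ∀ n, 1 ≤ n →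
        lam n ^ ((β - 1) / 3 + ε) * |Y n t| ≤ C) →
      (∀ n, 1 ≤ n → Y n 0 = X n 0) →
      ∀ n, 1 ≤ n → ∀ t ∈ Set.Icc (0 : ℝ) T, Y n t = X n t := by
  intro Y hYsol hYbd hY0 m hm t ht
  obtain ⟨CX, hCX⟩ := hbd
  obtain ⟨CY, hCY⟩ := hYbd
  set γ : ℝ := (β - 1) / 3 + ε with hγdef
  set C : ℝ := max CX CY with hCdef
  have h0T : (0:ℝ) ∈ Set.Icc (0:ℝ) T := ⟨le_refl _, hT.le⟩
  have hC0 : 0 ≤ C := by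
    have h := hCY 0 h0T 1 le_rfl
    have h2 : 0 ≤ lam 1 ^ γ * |Y 1 0| :=
      mul_nonneg (Real.rpow_nonneg (lam_nonneg 1) _) (abs_nonneg _)
    exact le_trans h2 (le_trans h (le_max_right _ _))
  -- pointwise bounds
  have hXb : ∀ s ∈ Set.Icc (0:ℝ) T, ∀ n, 1 ≤ n → X n s ≤ C * (2:ℝ)^(-((n:ℝ)*γ)) := by
    intro s hs n hn
    have h := hCX s hs n hn
    rw [lam_rpow hn] at h
    exact pow2_mul_le (le_trans h (le_max_left _ _))
  have hYabs : ∀ s ∈ Set.Icc (0:ℝ) T, ∀ n, 1 ≤ n → |Y n s| ≤ C * (2:ℝ)^(-((n:ℝ)*γ)) := by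
    intro s hs n hn
    have h := hCY s hs n hn
    rw [lam_rpow hn] at h
    exact pow2_mul_le (le_trans h (le_max_right _ _))
  have hYpos : ∀ n, 1 ≤ n → ∀ s ∈ Set.Icc (0:ℝ) T, 0 ≤ Y n s :=
    Y_nonneg hT hYsol (fun n hn => (hY0 n hn) ▸ hpos n hn 0 h0T)
  have hdb : ∀ s ∈ Set.Icc (0:ℝ) T, ∀ n, 1 ≤ n →
      |dd X Y n s| ≤ 2 * (C * (2:ℝ)^(-((n:ℝ)*γ))) := by
    intro s hs n hn
    have h1 : |dd X Y n s| ≤ |Y n s| + |X n s| := abs_sub _ _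
    rw [abs_of_nonneg (hpos n hn s hs)] at h1
    have := hYabs s hs n hn
    have := hXb s hs n hn
    linarith
  set K : ℝ := 8 * C^3 * (2:ℝ)^(-γ) with hKdef
  have hK0 : 0 ≤ K := by
    have : (0:ℝ) < (2:ℝ)^(-γ) := Real.rpow_pos_of_pos two_pos _
    positivity
  -- bound on the boundary term
  have hBB : ∀ s ∈ Set.Icc (0:ℝ) T, ∀ n, 1 ≤ n →
      -BB β X Y n s ≤ K * (2:ℝ)^((-(3*ε))*(n:ℝ)) := by
    intro s hs n hn
    have hwl : 0 ≤ 2 * ww n * lam n ^ β * X n s :=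
      mul_nonneg (mul_nonneg (mul_nonneg (by norm_num) (ww_pos n).le)
        (Real.rpow_nonneg (lam_nonneg n) _)) (hpos n hn s hs)
    have h1 : -BB β X Y n s ≤ 2 * ww n * lam n ^ β * X n s * (|dd X Y n s| * |dd X Y (n+1) s|) := by
      have : -(dd X Y n s * dd X Y (n+1) s) ≤ |dd X Y n s| * |dd X Y (n+1) s| := by
        rw [← abs_mul]; exact neg_le_abs _
      calc -BB β X Y n s = 2 * ww n * lam n ^ β * X n s * (-(dd X Y n s * dd X Y (n+1) s)) := by
            simp only [BB]; ring
        _ ≤ _ := mul_le_mul_of_nonneg_left this hwl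
    have h2 : 2 * ww n * lam n ^ β * X n s * (|dd X Y n s| * |dd X Y (n+1) s|)
        ≤ 2 * ww n * lam n ^ β * (C * (2:ℝ)^(-((n:ℝ)*γ))) *
          ((2 * (C * (2:ℝ)^(-((n:ℝ)*γ)))) * (2 * (C * (2:ℝ)^(-(((n+1:ℕ)):ℝ)*γ)))) := by
      have hwn : 0 ≤ ww n := (ww_pos n).le
      have hln : 0 ≤ lam n ^ β := Real.rpow_nonneg (lam_nonneg n) β
      gcongr <;> first
        | exact abs_nonneg _
        | exact hXb s hs n hn
        | exact hdb s hs n hn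
        | exact (by rw [neg_mul]; exact hdb s hs (n+1) (by omega))
        | exact mul_nonneg (mul_nonneg (by norm_num) hwn) hln
        | exact mul_nonneg (mul_nonneg (mul_nonneg (by norm_num) hwn) hln) (by positivity)
        | positivity
    have h3 : 2 * ww n * lam n ^ β * (C * (2:ℝ)^(-((n:ℝ)*γ))) *
          ((2 * (C * (2:ℝ)^(-((n:ℝ)*γ)))) * (2 * (C * (2:ℝ)^(-(((n+1:ℕ)):ℝ)*γ))))
        = K * (2:ℝ)^((-(3*ε))*(n:ℝ)) := by
      rw [ww_eq_rpow, lam_rpow hn]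
      push_cast
      calc 2 * (2:ℝ)^(-(n:ℝ)) * (2:ℝ)^((n:ℝ)*β) * (C * (2:ℝ)^(-((n:ℝ)*γ))) *
            (2 * (C * (2:ℝ)^(-((n:ℝ)*γ))) * (2 * (C * (2:ℝ)^(-((n:ℝ)+1)*γ))))
          = 8*C^3 * ((2:ℝ)^(-(n:ℝ)) * ((2:ℝ)^((n:ℝ)*β) * ((2:ℝ)^(-((n:ℝ)*γ)) *
            ((2:ℝ)^(-((n:ℝ)*γ)) * (2:ℝ)^(-((n:ℝ)+1)*γ))))) := by ring
        _ = 8*C^3 * (2:ℝ)^((-(n:ℝ)) + ((n:ℝ)*β + (-((n:ℝ)*γ) + (-((n:ℝ)*γ) + -((n:ℝ)+1)*γ)))) := by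
            rw [← Real.rpow_add two_pos, ← Real.rpow_add two_pos, ← Real.rpow_add two_pos,
              ← Real.rpow_add two_pos]
        _ = K * (2:ℝ)^((-(3*ε))*(n:ℝ)) := by
            rw [show (-(n:ℝ)) + ((n:ℝ)*β + (-((n:ℝ)*γ) + (-((n:ℝ)*γ) + -((n:ℝ)+1)*γ)))
                = (-(3*ε))*(n:ℝ) + (-γ) from by rw [hγdef]; ring,
              Real.rpow_add two_pos, hKdef]
            ring
    linarith [h1, h2, h3.le]
  -- derivative of each weighted square
  have hsq : ∀ (i:ℕ), ∀ s ∈ Set.Icc (0:ℝ) T,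
      HasDerivWithinAt (fun u => ww (i+1) * (dd X Y (i+1) u)^2)
        (AA β X Y (i+1) s - BB β X Y (i+1) s - GG β X Y (i+1) s) (Set.Icc 0 T) s := by
    intro i s hs
    have h1 := (((hYsol (i+1) (by omega) s hs).sub (hX (i+1) (by omega) s hs)).pow 2).const_mul
      (ww (i+1))
    replace h1 : HasDerivWithinAt (fun u => ww (i+1) * (dd X Y (i+1) u)^2) _ (Set.Icc 0 T) s := h1
    convert h1 using 1
    simp only [AA, BB, GG, dd, Nat.add_sub_cancel, Pi.sub_apply]
    push_cast
    ring
  -- the key Gronwall-free estimate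
  have key : ∀ M : ℕ, ∀ s ∈ Set.Icc (0:ℝ) T,
      (∑ i ∈ Finset.range (M+1), ww (i+1) * (dd X Y (i+1) s)^2)
        ≤ (K * (2:ℝ)^((-(3*ε))*(((M+1:ℕ)):ℝ))) * s := by
    intro M s₀ hs₀
    set L : ℝ := K * (2:ℝ)^((-(3*ε))*(((M+1:ℕ)):ℝ)) with hLdef
    have hL0 : 0 ≤ L := mul_nonneg hK0 (Real.rpow_nonneg (by norm_num) _)
    set Φ : ℝ → ℝ := fun u => ∑ i ∈ Finset.range (M+1), ww (i+1) * (dd X Y (i+1) u)^2 with hΦdef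
    have hΦ' : ∀ s ∈ Set.Icc (0:ℝ) T, HasDerivWithinAt Φ
        (∑ i ∈ Finset.range (M+1),
          (AA β X Y (i+1) s - BB β X Y (i+1) s - GG β X Y (i+1) s)) (Set.Icc 0 T) s := by
      intro s hs
      exact HasDerivWithinAt.fun_sum (fun i _ => hsq i s hs)
    have hSle : ∀ s ∈ Set.Icc (0:ℝ) T,
        (∑ i ∈ Finset.range (M+1),
          (AA β X Y (i+1) s - BB β X Y (i+1) s - GG β X Y (i+1) s)) ≤ L := by
      intro s hs
      have e0 : (∑ i ∈ Finset.range (M+1),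
            (AA β X Y (i+1) s - BB β X Y (i+1) s - GG β X Y (i+1) s))
          = (∑ i ∈ Finset.range (M+1), AA β X Y (i+1) s)
            - (∑ i ∈ Finset.range (M+1), BB β X Y (i+1) s)
            - (∑ i ∈ Finset.range (M+1), GG β X Y (i+1) s) := by
        rw [Finset.sum_sub_distrib, Finset.sum_sub_distrib]
      have e1 : (∑ i ∈ Finset.range (M+1), AA β X Y (i+1) s)
          = (∑ i ∈ Finset.range M, AA β X Y (i+2) s) + AA β X Y 1 s := by
        rw [Finset.sum_range_succ' (fun i => AA β X Y (i+1) s) M]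
      have hA1 : AA β X Y 1 s = 0 := by
        simp [AA, lam_zero_rpow hβ.ne']
      have e2 : (∑ i ∈ Finset.range (M+1), BB β X Y (i+1) s)
          = (∑ i ∈ Finset.range M, BB β X Y (i+1) s) + BB β X Y (M+1) s := by
        rw [Finset.sum_range_succ]
      have e3 : (∑ i ∈ Finset.range (M+1), GG β X Y (i+1) s)
          = (∑ i ∈ Finset.range M, GG β X Y (i+1) s) + GG β X Y (M+1) s := by
        rw [Finset.sum_range_succ]
      have hsum : (∑ i ∈ Finset.range M, AA β X Y (i+2) s)
          - (∑ i ∈ Finset.range M, BB β X Y (i+1) s)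
          - (∑ i ∈ Finset.range M, GG β X Y (i+1) s) ≤ 0 := by
        rw [← Finset.sum_sub_distrib, ← Finset.sum_sub_distrib]
        apply Finset.sum_nonpos
        intro i _
        rw [step_eq]
        have h1 : 0 ≤ ww (i+1) * lam (i+1) ^ β * (dd X Y (i+1) s)^2 * (X (i+2) s + Y (i+2) s) := by
          have hx2 := hpos (i+2) (by omega) s hs
          have hy2 := hYpos (i+2) (by omega) s hs
          have := (ww_pos (i+1)).le
          have := Real.rpow_nonneg (lam_nonneg (i+1)) β
          positivity
        linarith
      have hG : 0 ≤ GG β X Y (M+1) s := by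
        simp only [GG]
        have hy2 := hYpos (M+2) (by omega) s hs
        have h1 := (ww_pos (M+1)).le
        have h2 := Real.rpow_nonneg (lam_nonneg (M+1)) β
        positivity
      have hB := hBB s hs (M+1) (by omega)
      rw [e0, e1, e2, e3, hA1]
      rw [hLdef]
      linarith
    -- integrate the inequality
    have hmono : MonotoneOn (fun u => L * u - Φ u) (Set.Icc 0 T) := by
      apply mono_aux (f' := fun s => L - (∑ i ∈ Finset.range (M+1),
        (AA β X Y (i+1) s - BB β X Y (i+1) s - GG β X Y (i+1) s)))
      · intro s hs
        exact ((hasDerivAt_id s).const_mul L).hasDerivWithinAt.sub (hΦ' s hs) |>.congr_deriv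
          (by ring)
      · intro s hs
        have := hSle s hs
        linarith
    have hΦ0 : Φ 0 = 0 := by
      apply Finset.sum_eq_zero
      intro i _
      simp [dd, hY0 (i+1) (by omega)]
    have := hmono h0T hs₀ hs₀.1
    simp only [mul_zero, hΦ0, sub_zero, zero_sub] at this
    simp only [hΦdef] at this ⊢
    linarith
  -- conclude : take the single term i = m-1 and let M → ∞
  have hsingle : ∀ M : ℕ, m ≤ M + 1 →
      ww m * (dd X Y m t)^2 ≤ (K * T) * ((2:ℝ)^(-(3*ε)))^(M+1) := by
    intro M hmM
    have hmem : m - 1 ∈ Finset.range (M+1) := Finset.mem_range.mpr (by omega)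
    have hterm : ww m * (dd X Y m t)^2
        ≤ ∑ i ∈ Finset.range (M+1), ww (i+1) * (dd X Y (i+1) t)^2 := by
      have := Finset.single_le_sum
        (f := fun i => ww (i+1) * (dd X Y (i+1) t)^2)
        (fun i _ => mul_nonneg (ww_pos (i+1)).le (sq_nonneg _)) hmem
      simpa only [show m - 1 + 1 = m from by omega] using this
    have h2 := key M t ht
    have h3 : (K * (2:ℝ)^((-(3*ε))*(((M+1:ℕ)):ℝ))) * t
        ≤ (K * (2:ℝ)^((-(3*ε))*(((M+1:ℕ)):ℝ))) * T :=
      mul_le_mul_of_nonneg_left ht.2 (mul_nonneg hK0 (Real.rpow_nonneg (by norm_num) _))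
    have h4 : (2:ℝ)^((-(3*ε))*(((M+1:ℕ)):ℝ)) = ((2:ℝ)^(-(3*ε)))^(M+1) := by
      rw [Real.rpow_mul (by norm_num : (0:ℝ) ≤ 2), Real.rpow_natCast]
    calc ww m * (dd X Y m t)^2 ≤ _ := hterm
      _ ≤ _ := h2
      _ ≤ (K * (2:ℝ)^((-(3*ε))*(((M+1:ℕ)):ℝ))) * T := h3
      _ = (K * T) * ((2:ℝ)^(-(3*ε)))^(M+1) := by rw [h4]; ring
  have hr0 : (0:ℝ) ≤ (2:ℝ)^(-(3*ε)) := Real.rpow_nonneg (by norm_num) _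
  have hr1 : (2:ℝ)^(-(3*ε)) < 1 :=
    Real.rpow_lt_one_of_one_lt_of_neg one_lt_two (by linarith)
  have htend : Filter.Tendsto (fun M : ℕ => (K * T) * ((2:ℝ)^(-(3*ε)))^(M+1))
      Filter.atTop (nhds 0) := by
    have h1 : Filter.Tendsto (fun M : ℕ => ((2:ℝ)^(-(3*ε)))^(M+1)) Filter.atTop (nhds 0) :=
      (tendsto_pow_atTop_nhds_zero_of_lt_one hr0 hr1).comp (tendsto_add_atTop_nat 1)
    have := h1.const_mul (K * T)
    simpa using this
  have hfin : ww m * (dd X Y m t)^2 ≤ 0 := by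
    exact ge_of_tendsto htend
      (Filter.eventually_atTop.mpr ⟨m, fun M hM => hsingle M (by omega)⟩)
  have hz : (dd X Y m t)^2 = 0 := by
    have h1 := ww_pos m
    nlinarith [sq_nonneg (dd X Y m t)]
  have : dd X Y m t = 0 := by
    exact pow_eq_zero_iff (by norm_num) |>.mp hz
  simpa [dd, sub_eq_zero] using this
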